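/- If (X_1, X_2, Y_1, Y_2) has joint density f*(x_1,x_2,y_1,y_2) = 1{0≤x_1≤x_2≤1}·1{0≤y_2<y_1≤1} + 1{0≤x_2<x_1≤1}·1{1<y_2<y_1≤2} + 1{1<x_1≤x_2≤2}·1{0≤y_1≤y_2≤1} + 1{1<x_2<x_1≤2}·1{1<y_1≤y_2≤2}, then P((X_1 ≤ X_2 and Y_1 ≤ Y_2) or (X_2 < X_1 and Y_2 < Y_1)) = 1/2. -/

import Mathlib

open MeasureTheory ENNReal Set

noncomputable def ind (P : Prop) : ℝ := by classical exact if P then 1 else 0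

/-- The density `f*` from the counterexample. -/
noncomputable def fstar (x₁ x₂ y₁ y₂ : ℝ) : ℝ :=
  ind (0 ≤ x₁ ∧ x₁ ≤ x₂ ∧ x₂ ≤ 1) * ind (0 ≤ y₂ ∧ y₂ < y₁ ∧ y₁ ≤ 1) +
  ind (0 ≤ x₂ ∧ x₂ < x₁ ∧ x₁ ≤ 1) * ind (1 < y₂ ∧ y₂ < y₁ ∧ y₁ ≤ 2) +
  ind (1 < x₁ ∧ x₁ ≤ x₂ ∧ x₂ ≤ 2) * ind (0 ≤ y₁ ∧ y₁ ≤ y₂ ∧ y₂ ≤ 1) +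
  ind (1 < x₂ ∧ x₂ < x₁ ∧ x₁ ≤ 2) * ind (1 < y₁ ∧ y₁ ≤ y₂ ∧ y₂ ≤ 2)

lemma lint_ofReal_ind {f : ℝ → ℝ} {s : Set ℝ} (hs : MeasurableSet s)
    (hf : IntegrableOn f s) (h0 : ∀ x ∈ s, 0 ≤ f x) :
    ∫⁻ u, s.indicator (fun u => ENNReal.ofReal (f u)) u =
      ENNReal.ofReal (∫ u in s, f u) := by
  rw [lintegral_indicator hs,
    ofReal_integral_eq_lintegral_ofReal hf ((ae_restrict_iff' hs).mpr (ae_of_all _ h0))]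

lemma triL1 : ∫⁻ u : ℝ, ∫⁻ v : ℝ, (if 0 ≤ v ∧ v < u ∧ u ≤ 1 then (1:ℝ≥0∞) else 0) =
    ENNReal.ofReal (1/2) := by
  have h1 : ∀ u : ℝ, ∫⁻ v : ℝ, (if 0 ≤ v ∧ v < u ∧ u ≤ 1 then (1:ℝ≥0∞) else 0) =
      (Set.Ioc (0:ℝ) 1).indicator (fun u => ENNReal.ofReal u) u := by
    intro u
    by_cases hu : u ≤ 1
    · have : (fun v : ℝ => if 0 ≤ v ∧ v < u ∧ u ≤ 1 then (1:ℝ≥0∞) else 0) =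
        (Set.Ico (0:ℝ) u).indicator 1 := by
        funext v; simp [Set.indicator_apply, Set.mem_Ico, hu]
      rw [this, lintegral_indicator_one measurableSet_Ico, Real.volume_Ico]
      by_cases hu0 : 0 < u
      · simp [Set.indicator_apply, hu, hu0]
      · simp only [Set.indicator_apply, Set.mem_Ioc]
        rw [if_neg (by tauto)]
        simp [ENNReal.ofReal_eq_zero]; linarith
    · simp only [Set.indicator_apply, Set.mem_Ioc]
      rw [if_neg (by tauto)]
      simp [hu]
  simp_rw [h1]
  rw [lint_ofReal_ind (f := fun u => u) measurableSet_Ioc (continuous_id.integrableOn_Ioc)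
      (fun x hx => le_of_lt hx.1)]
  rw [← intervalIntegral.integral_of_le (by norm_num : (0:ℝ) ≤ 1)]
  rw [integral_id]
  norm_num

lemma triL2 : ∫⁻ u : ℝ, ∫⁻ v : ℝ, (if 1 < v ∧ v < u ∧ u ≤ 2 then (1:ℝ≥0∞) else 0) =
    ENNReal.ofReal (1/2) := by
  have h1 : ∀ u : ℝ, ∫⁻ v : ℝ, (if 1 < v ∧ v < u ∧ u ≤ 2 then (1:ℝ≥0∞) else 0) =
      (Set.Ioc (1:ℝ) 2).indicator (fun u => ENNReal.ofReal (u - 1)) u := by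
    intro u
    by_cases hu : u ≤ 2
    · have : (fun v : ℝ => if 1 < v ∧ v < u ∧ u ≤ 2 then (1:ℝ≥0∞) else 0) =
        (Set.Ioo (1:ℝ) u).indicator 1 := by
        funext v; simp [Set.indicator_apply, Set.mem_Ioo, hu]
      rw [this, lintegral_indicator_one measurableSet_Ioo, Real.volume_Ioo]
      by_cases hu1 : 1 < u
      · simp [Set.indicator_apply, hu, hu1]
      · simp only [Set.indicator_apply, Set.mem_Ioc]
        rw [if_neg (by tauto)]
        simp [ENNReal.ofReal_eq_zero]; linarith
    · simp only [Set.indicator_apply, Set.mem_Ioc]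
      rw [if_neg (by tauto)]
      simp [hu]
  simp_rw [h1]
  rw [lint_ofReal_ind (f := fun u => u - 1) measurableSet_Ioc
      ((continuous_id.sub continuous_const).integrableOn_Ioc)
      (fun x hx => by linarith [hx.1])]
  rw [← intervalIntegral.integral_of_le (by norm_num : (1:ℝ) ≤ 2),
    intervalIntegral.integral_sub intervalIntegral.intervalIntegrable_id
      intervalIntegrable_const,
    integral_id, intervalIntegral.integral_const]
  norm_num

lemma triL3 : ∫⁻ u : ℝ, ∫⁻ v : ℝ, (if 1 < u ∧ u ≤ v ∧ v ≤ 2 then (1:ℝ≥0∞) else 0) =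
    ENNReal.ofReal (1/2) := by
  have h1 : ∀ u : ℝ, ∫⁻ v : ℝ, (if 1 < u ∧ u ≤ v ∧ v ≤ 2 then (1:ℝ≥0∞) else 0) =
      (Set.Ioc (1:ℝ) 2).indicator (fun u => ENNReal.ofReal (2 - u)) u := by
    intro u
    by_cases hu : 1 < u
    · have : (fun v : ℝ => if 1 < u ∧ u ≤ v ∧ v ≤ 2 then (1:ℝ≥0∞) else 0) =
        (Set.Icc u 2).indicator 1 := by
        funext v; simp [Set.indicator_apply, Set.mem_Icc, hu]
      rw [this, lintegral_indicator_one measurableSet_Icc, Real.volume_Icc]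
      by_cases hu2 : u ≤ 2
      · simp [Set.indicator_apply, hu, hu2]
      · simp only [Set.indicator_apply, Set.mem_Ioc]
        rw [if_neg (by tauto)]
        simp [ENNReal.ofReal_eq_zero]; linarith
    · simp only [Set.indicator_apply, Set.mem_Ioc]
      rw [if_neg (by tauto)]
      simp [hu]
  simp_rw [h1]
  rw [lint_ofReal_ind (f := fun u => 2 - u) measurableSet_Ioc
      ((continuous_const.sub continuous_id).integrableOn_Ioc)
      (fun x hx => by linarith [hx.2])]
  rw [← intervalIntegral.integral_of_le (by norm_num : (1:ℝ) ≤ 2),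
    intervalIntegral.integral_sub intervalIntegrable_const
      intervalIntegral.intervalIntegrable_id,
    integral_id, intervalIntegral.integral_const]
  norm_num

lemma triL4 : ∫⁻ u : ℝ, ∫⁻ v : ℝ, (if 0 ≤ u ∧ u ≤ v ∧ v ≤ 1 then (1:ℝ≥0∞) else 0) =
    ENNReal.ofReal (1/2) := by
  have h1 : ∀ u : ℝ, ∫⁻ v : ℝ, (if 0 ≤ u ∧ u ≤ v ∧ v ≤ 1 then (1:ℝ≥0∞) else 0) =
      (Set.Icc (0:ℝ) 1).indicator (fun u => ENNReal.ofReal (1 - u)) u := by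
    intro u
    by_cases hu : 0 ≤ u
    · have : (fun v : ℝ => if 0 ≤ u ∧ u ≤ v ∧ v ≤ 1 then (1:ℝ≥0∞) else 0) =
        (Set.Icc u 1).indicator 1 := by
        funext v; simp [Set.indicator_apply, Set.mem_Icc, hu]
      rw [this, lintegral_indicator_one measurableSet_Icc, Real.volume_Icc]
      by_cases hu1 : u ≤ 1
      · simp [Set.indicator_apply, hu, hu1]
      · simp only [Set.indicator_apply, Set.mem_Icc]
        rw [if_neg (by tauto)]
        simp [ENNReal.ofReal_eq_zero]; linarith
    · simp only [Set.indicator_apply, Set.mem_Icc]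
      rw [if_neg (by tauto)]
      simp [hu]
  simp_rw [h1]
  rw [lint_ofReal_ind (f := fun u => 1 - u) measurableSet_Icc
      ((continuous_const.sub continuous_id).integrableOn_Icc)
      (fun x hx => by linarith [hx.2]),
    MeasureTheory.integral_Icc_eq_integral_Ioc,
    ← intervalIntegral.integral_of_le (by norm_num : (0:ℝ) ≤ 1),
    intervalIntegral.integral_sub intervalIntegrable_const
      intervalIntegral.intervalIntegrable_id,
    integral_id, intervalIntegral.integral_const]
  norm_num

lemma prod_split (g h : ℝ × ℝ → ℝ≥0∞) (hg : Measurable g) (hh : Measurable h) :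
    ∫⁻ p : ℝ × ℝ × ℝ × ℝ, g (p.1, p.2.1) * h p.2.2 =
      (∫⁻ z : ℝ × ℝ, g z) * ∫⁻ z : ℝ × ℝ, h z := by
  have hg4 : Measurable fun p : ℝ × ℝ × ℝ × ℝ => g (p.1, p.2.1) * h p.2.2 :=
    (hg.comp (measurable_fst.prodMk (measurable_fst.comp measurable_snd))).mul
      (hh.comp (measurable_snd.comp measurable_snd))
  rw [Measure.volume_eq_prod, lintegral_prod _ hg4.aemeasurable]
  dsimp only
  have inner : ∀ x₁ : ℝ, ∫⁻ q : ℝ × ℝ × ℝ, g (x₁, q.1) * h q.2 =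
      (∫⁻ x₂ : ℝ, g (x₁, x₂)) * ∫⁻ z : ℝ × ℝ, h z := by
    intro x₁
    have hg3 : Measurable fun q : ℝ × ℝ × ℝ => g (x₁, q.1) * h q.2 :=
      ((hg.comp (measurable_const.prodMk measurable_fst))).mul (hh.comp measurable_snd)
    rw [Measure.volume_eq_prod, lintegral_prod _ hg3.aemeasurable]
    dsimp only
    simp_rw [lintegral_const_mul _ hh]
    have hgx : Measurable fun x : ℝ => g (x₁, x) :=
      hg.comp (measurable_const.prodMk measurable_id)
    rw [lintegral_mul_const _ hgx]
  simp_rw [inner]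
  rw [lintegral_mul_const _ (Measurable.lintegral_prod_right
      (f := fun x y => g (x, y)) (by exact hg))]
  congr 1
  rw [Measure.volume_eq_prod, lintegral_prod _ hg.aemeasurable]

lemma ind_nonneg (P : Prop) : 0 ≤ ind P := by by_cases h : P <;> simp [ind, h]

lemma ind_of_not (P : Prop) (h : ¬P) : ind P = 0 := by simp [ind, h]

lemma ofReal_ind (P : Prop) [Decidable P] :
    ENNReal.ofReal (ind P) = if P then 1 else 0 := by
  by_cases h : P <;> simp [ind, h]

noncomputable def eA2 : ℝ × ℝ → ℝ≥0∞ := fun z => if 0 ≤ z.2 ∧ z.2 < z.1 ∧ z.1 ≤ 1 then 1 else 0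
noncomputable def eB2 : ℝ × ℝ → ℝ≥0∞ := fun w => if 1 < w.2 ∧ w.2 < w.1 ∧ w.1 ≤ 2 then 1 else 0
noncomputable def eA3 : ℝ × ℝ → ℝ≥0∞ := fun z => if 1 < z.1 ∧ z.1 ≤ z.2 ∧ z.2 ≤ 2 then 1 else 0
noncomputable def eB3 : ℝ × ℝ → ℝ≥0∞ := fun w => if 0 ≤ w.1 ∧ w.1 ≤ w.2 ∧ w.2 ≤ 1 then 1 else 0

lemma meas_eA2 : Measurable eA2 :=
  Measurable.ite ((measurableSet_le measurable_const measurable_snd).inter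
    ((measurableSet_lt measurable_snd measurable_fst).inter
      (measurableSet_le measurable_fst measurable_const)))
    measurable_const measurable_const

lemma meas_eB2 : Measurable eB2 :=
  Measurable.ite ((measurableSet_lt measurable_const measurable_snd).inter
    ((measurableSet_lt measurable_snd measurable_fst).inter
      (measurableSet_le measurable_fst measurable_const)))
    measurable_const measurable_const

lemma meas_eA3 : Measurable eA3 :=
  Measurable.ite ((measurableSet_lt measurable_const measurable_fst).inter
    ((measurableSet_le measurable_fst measurable_snd).inter
      (measurableSet_le measurable_snd measurable_const)))
    measurable_const measurable_const

lemma meas_eB3 : Measurable eB3 :=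
  Measurable.ite ((measurableSet_le measurable_const measurable_fst).inter
    ((measurableSet_le measurable_fst measurable_snd).inter
      (measurableSet_le measurable_snd measurable_const)))
    measurable_const measurable_const

lemma int_eA2 : ∫⁻ z : ℝ × ℝ, eA2 z = ENNReal.ofReal (1/2) := by
  rw [Measure.volume_eq_prod, lintegral_prod _ meas_eA2.aemeasurable]
  simp only [eA2]
  exact triL1

lemma int_eB2 : ∫⁻ z : ℝ × ℝ, eB2 z = ENNReal.ofReal (1/2) := by
  rw [Measure.volume_eq_prod, lintegral_prod _ meas_eB2.aemeasurable]
  simp only [eB2]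
  exact triL2

lemma int_eA3 : ∫⁻ z : ℝ × ℝ, eA3 z = ENNReal.ofReal (1/2) := by
  rw [Measure.volume_eq_prod, lintegral_prod _ meas_eA3.aemeasurable]
  simp only [eA3]
  exact triL3

lemma int_eB3 : ∫⁻ z : ℝ × ℝ, eB3 z = ENNReal.ofReal (1/2) := by
  rw [Measure.volume_eq_prod, lintegral_prod _ meas_eB3.aemeasurable]
  simp only [eB3]
  exact triL4

def Sset : Set (ℝ × ℝ × ℝ × ℝ) :=
  {p | (p.1 ≤ p.2.1 ∧ p.2.2.1 ≤ p.2.2.2) ∨ (p.2.1 < p.1 ∧ p.2.2.2 < p.2.2.1)}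

lemma meas_Sset : MeasurableSet Sset := by
  have m1 : Measurable fun p : ℝ × ℝ × ℝ × ℝ => p.1 := measurable_fst
  have m2 : Measurable fun p : ℝ × ℝ × ℝ × ℝ => p.2.1 := measurable_fst.comp measurable_snd
  have m3 : Measurable fun p : ℝ × ℝ × ℝ × ℝ => p.2.2.1 :=
    measurable_fst.comp (measurable_snd.comp measurable_snd)
  have m4 : Measurable fun p : ℝ × ℝ × ℝ × ℝ => p.2.2.2 :=
    measurable_snd.comp (measurable_snd.comp measurable_snd)
  exact ((measurableSet_le m1 m2).inter (measurableSet_le m3 m4)).union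
    ((measurableSet_lt m2 m1).inter (measurableSet_lt m4 m3))

lemma key (p : ℝ × ℝ × ℝ × ℝ) :
    Sset.indicator (fun p : ℝ × ℝ × ℝ × ℝ =>
        ENNReal.ofReal (fstar p.1 p.2.1 p.2.2.1 p.2.2.2)) p =
      eA2 (p.1, p.2.1) * eB2 p.2.2 + eA3 (p.1, p.2.1) * eB3 p.2.2 := by
  obtain ⟨x₁, x₂, y₁, y₂⟩ := p
  simp only [Set.indicator_apply, Sset, Set.mem_setOf_eq, eA2, eB2, eA3, eB3]
  by_cases hS : (x₁ ≤ x₂ ∧ y₁ ≤ y₂) ∨ (x₂ < x₁ ∧ y₂ < y₁)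
  · rw [if_pos hS]
    simp only [fstar]
    have h1 : ind (0 ≤ x₁ ∧ x₁ ≤ x₂ ∧ x₂ ≤ 1) * ind (0 ≤ y₂ ∧ y₂ < y₁ ∧ y₁ ≤ 1) = 0 := by
      rcases hS with ⟨h, h'⟩ | ⟨h, h'⟩
      · rw [ind_of_not (0 ≤ y₂ ∧ y₂ < y₁ ∧ y₁ ≤ 1)
          (fun hc => absurd hc.2.1 (not_lt.mpr h')), mul_zero]
      · rw [ind_of_not (0 ≤ x₁ ∧ x₁ ≤ x₂ ∧ x₂ ≤ 1)
          (fun hc => absurd hc.2.1 (not_le.mpr h)), zero_mul]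
    have h4 : ind (1 < x₂ ∧ x₂ < x₁ ∧ x₁ ≤ 2) * ind (1 < y₁ ∧ y₁ ≤ y₂ ∧ y₂ ≤ 2) = 0 := by
      rcases hS with ⟨h, h'⟩ | ⟨h, h'⟩
      · rw [ind_of_not (1 < x₂ ∧ x₂ < x₁ ∧ x₁ ≤ 2)
          (fun hc => absurd hc.2.1 (not_lt.mpr h)), zero_mul]
      · rw [ind_of_not (1 < y₁ ∧ y₁ ≤ y₂ ∧ y₂ ≤ 2)
          (fun hc => absurd hc.2.1 (not_le.mpr h')), mul_zero]
    rw [h1, h4, zero_add, add_zero,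
      ENNReal.ofReal_add (mul_nonneg (ind_nonneg _) (ind_nonneg _))
        (mul_nonneg (ind_nonneg _) (ind_nonneg _)),
      ENNReal.ofReal_mul (ind_nonneg _), ENNReal.ofReal_mul (ind_nonneg _),
      ofReal_ind, ofReal_ind, ofReal_ind, ofReal_ind]
  · rw [if_neg hS]
    have h2 : ¬((0 ≤ x₂ ∧ x₂ < x₁ ∧ x₁ ≤ 1) ∧ (1 < y₂ ∧ y₂ < y₁ ∧ y₁ ≤ 2)) :=
      fun h => hS (Or.inr ⟨h.1.2.1, h.2.2.1⟩)
    have h3 : ¬((1 < x₁ ∧ x₁ ≤ x₂ ∧ x₂ ≤ 2) ∧ (0 ≤ y₁ ∧ y₁ ≤ y₂ ∧ y₂ ≤ 1)) :=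
      fun h => hS (Or.inl ⟨h.1.2.1, h.2.2.1⟩)
    rcases not_and_or.mp h2 with h | h <;> rcases not_and_or.mp h3 with h' | h' <;>
      simp [h, h']

/-- Under the density `f*`, the ordinal patterns of `(X₁,X₂)` and `(Y₁,Y₂)` coincide with
probability `1/2`. -/
theorem coincident_patterns_prob_half {Ω : Type*} [MeasurableSpace Ω]
    (ℙ : Measure Ω) [IsProbabilityMeasure ℙ] (X₁ X₂ Y₁ Y₂ : Ω → ℝ)
    (hV : Measurable fun ω => (X₁ ω, X₂ ω, Y₁ ω, Y₂ ω))
    (hlaw : Measure.map (fun ω => (X₁ ω, X₂ ω, Y₁ ω, Y₂ ω)) ℙ =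
      volume.withDensity (fun p : ℝ × ℝ × ℝ × ℝ =>
        ENNReal.ofReal (fstar p.1 p.2.1 p.2.2.1 p.2.2.2))) :
    ℙ {ω | (X₁ ω ≤ X₂ ω ∧ Y₁ ω ≤ Y₂ ω) ∨ (X₂ ω < X₁ ω ∧ Y₂ ω < Y₁ ω)} = 1 / 2 := by
  have hE : {ω | (X₁ ω ≤ X₂ ω ∧ Y₁ ω ≤ Y₂ ω) ∨ (X₂ ω < X₁ ω ∧ Y₂ ω < Y₁ ω)} =
      (fun ω => (X₁ ω, X₂ ω, Y₁ ω, Y₂ ω)) ⁻¹' Sset := rfl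
  have m2 : Measurable fun p : ℝ × ℝ × ℝ × ℝ => eA2 (p.1, p.2.1) * eB2 p.2.2 :=
    (meas_eA2.comp (measurable_fst.prodMk (measurable_fst.comp measurable_snd))).mul
      (meas_eB2.comp (measurable_snd.comp measurable_snd))
  rw [hE, ← Measure.map_apply hV meas_Sset, hlaw, withDensity_apply _ meas_Sset,
    ← lintegral_indicator meas_Sset, lintegral_congr key,
    lintegral_add_left m2,
    prod_split eA2 eB2 meas_eA2 meas_eB2, prod_split eA3 eB3 meas_eA3 meas_eB3,
    int_eA2, int_eB2, int_eA3, int_eB3,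
    ← ENNReal.ofReal_mul (by norm_num), ← ENNReal.ofReal_add (by norm_num) (by norm_num)]
  norm_num
  rw [ENNReal.ofReal_div_of_pos (by norm_num)]
  norm_num
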